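/- Let B be an H-Galois extension of k with Miyashita–Ulbrich action ▷. Then B with its comodule structure and the action ▷ satisfies braided commutativity: a b = b₍₂₎ (S⁻¹(b₍₁₎) ▷ a) for all a, b ∈ B. -/

import Mathlib

open TensorProduct LinearMap

noncomputable section

variable (k H B : Type) [Field k]
variable [Ring H] [HopfAlgebra k H] [Ring B] [Algebra k B]

/-- The lifted action map `H ⊗ B → B`. -/
def actT (act : H →ₗ[k] B →ₗ[k] B) : H ⊗[k] B →ₗ[k] B := TensorProduct.lift act

/-- `(Δ x) ⊗ (a ⊗ b) ↦ (x₍₁₎ ▷ a)(x₍₂₎ ▷ b)`. -/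
def maMap (act : H →ₗ[k] B →ₗ[k] B) : (H ⊗[k] H) ⊗[k] (B ⊗[k] B) →ₗ[k] B :=
  (LinearMap.mul' k B) ∘ₗ (TensorProduct.map (actT k H B act) (actT k H B act)) ∘ₗ
    (TensorProduct.tensorTensorTensorComm k H H B B).toLinearMap

/-- The Galois map `Γ : B ⊗ B → H ⊗ B`, `x ⊗ y ↦ x₍₁₎ ⊗ x₍₂₎ y`. -/
def galoisMap (coact : B →ₗ[k] H ⊗[k] B) : B ⊗[k] B →ₗ[k] H ⊗[k] B :=
  (TensorProduct.map LinearMap.id (LinearMap.mul' k B))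
    ∘ₗ (TensorProduct.assoc k H B B).toLinearMap
    ∘ₗ (TensorProduct.map coact LinearMap.id)

/-- `(p ⊗ q) ⊗ a ↦ p a q`. -/
def sandwich : (B ⊗[k] B) ⊗[k] B →ₗ[k] B :=
  (LinearMap.mul' k B)
    ∘ₗ (TensorProduct.map LinearMap.id (LinearMap.mul' k B))
    ∘ₗ (TensorProduct.map LinearMap.id (TensorProduct.comm k B B).toLinearMap)
    ∘ₗ (TensorProduct.assoc k B B B).toLinearMap

/-- The Miyashita–Ulbrich action `x ▷ a = Γ⁻¹(x ⊗ 1)⁽¹⁾ a Γ⁻¹(x ⊗ 1)⁽²⁾`. -/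
def muAct (Γinv : H ⊗[k] B →ₗ[k] B ⊗[k] B) : H →ₗ[k] B →ₗ[k] B :=
  (TensorProduct.curry (sandwich k B)).comp
    (Γinv.comp ((TensorProduct.mk k H B).flip 1))

/-- `a ⊗ b ↦ b₍₂₎ (S⁻¹(b₍₁₎) ▷ a)`. -/
def braid (act : H →ₗ[k] B →ₗ[k] B) (Sinv : H →ₗ[k] H) (coact : B →ₗ[k] H ⊗[k] B) :
    B ⊗[k] B →ₗ[k] B :=
  (LinearMap.mul' k B) ∘ₗ (TensorProduct.comm k B B).toLinearMap
    ∘ₗ (TensorProduct.map (actT k H B act) LinearMap.id)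
    ∘ₗ (TensorProduct.map (TensorProduct.map Sinv LinearMap.id) LinearMap.id)
    ∘ₗ (TensorProduct.map (TensorProduct.comm k B H).toLinearMap LinearMap.id)
    ∘ₗ (TensorProduct.assoc k B H B).symm.toLinearMap
    ∘ₗ (TensorProduct.map LinearMap.id coact)


open Coalgebra HopfAlgebra
set_option synthInstance.maxHeartbeats 1000000

section AuxA
variable {k H B}


namespace MUaux


lemma antipode_one' : HopfAlgebra.antipode (R := k) (1 : H) = 1 := by
  have h := mul_antipode_rTensor_comul_apply (R := k) (1 : H)
  simpa [Algebra.TensorProduct.one_def] using h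

lemma sum_counit_smul_left {ι : Type*} {a : H} (r : Repr k a ι) :
    ∑ i ∈ r.index, counit (R := k) (r.right i) • r.left i = a := by
  have h := congrArg (TensorProduct.rid k H) (sum_tmul_counit_eq r)
  simp only [map_sum, rid_tmul] at h
  rwa [one_smul] at h

lemma sum_counit_smul_right {ι : Type*} {a : H} (r : Repr k a ι) :
    ∑ i ∈ r.index, counit (R := k) (r.left i) • r.right i = a := by
  have h := congrArg (TensorProduct.lid k H) (sum_counit_tmul_eq r)
  simp only [map_sum, lid_tmul] at h
  rwa [one_smul] at h

/-- product of two representations -/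
def reprMul {ι κ : Type*} {a b : H} (ra : Repr k a ι) (rb : Repr k b κ) : Repr k (a * b) (ι × κ) where
  index := ra.index ×ˢ rb.index
  left := fun p => ra.left p.1 * rb.left p.2
  right := fun p => ra.right p.1 * rb.right p.2
  eq := by
    rw [Finset.sum_product, Bialgebra.comul_mul, ← ra.eq, ← rb.eq, Finset.sum_mul_sum]
    simp [Algebra.TensorProduct.tmul_mul_tmul]

/-- trilinear multiplication-style map -/
def lift₃ (f g h : H →ₗ[k] H) : H ⊗[k] (H ⊗[k] H) →ₗ[k] H :=
  (LinearMap.mul' k H) ∘ₗ TensorProduct.map f ((LinearMap.mul' k H) ∘ₗ TensorProduct.map g h)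

@[simp] lemma lift₃_tmul (f g h : H →ₗ[k] H) (x y z : H) :
    lift₃ f g h (x ⊗ₜ[k] (y ⊗ₜ[k] z)) = f x * (g y * h z) := by
  simp [lift₃]

end MUaux

namespace MUaux2
open MUaux


local notation "𝒮" => HopfAlgebra.antipode (R := k) (A := H)

lemma E_eq_right {ι κ ι' κ' : Type*} (a b : H) (ra : Repr k a ι) (rb : Repr k b κ)
    (rA : ∀ i, Repr k (ra.right i) ι') (rB : ∀ j, Repr k (rb.right j) κ') :
    (∑ j ∈ rb.index, ∑ m ∈ (rB j).index, ∑ i ∈ ra.index, ∑ l ∈ (rA i).index,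
      (𝒮 (rb.left j) * 𝒮 (ra.left i)) *
        ((rA i).left l * ((rB j).left m * 𝒮 ((rA i).right l * (rB j).right m))))
      = 𝒮 b * 𝒮 a := by
  have hA : ∑ i ∈ ra.index, counit (R := k) (ra.right i) • 𝒮 (ra.left i) = 𝒮 a := by
    rw [show (∑ i ∈ ra.index, counit (R := k) (ra.right i) • 𝒮 (ra.left i))
        = 𝒮 (∑ i ∈ ra.index, counit (R := k) (ra.right i) • ra.left i) by
      rw [map_sum]; exact Finset.sum_congr rfl fun i _ => (map_smul _ _ _).symm]
    rw [sum_counit_smul_left]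
  have hB : ∑ j ∈ rb.index, counit (R := k) (rb.right j) • 𝒮 (rb.left j) = 𝒮 b := by
    rw [show (∑ j ∈ rb.index, counit (R := k) (rb.right j) • 𝒮 (rb.left j))
        = 𝒮 (∑ j ∈ rb.index, counit (R := k) (rb.right j) • rb.left j) by
      rw [map_sum]; exact Finset.sum_congr rfl fun j _ => (map_smul _ _ _).symm]
    rw [sum_counit_smul_left]
  calc
    (∑ j ∈ rb.index, ∑ m ∈ (rB j).index, ∑ i ∈ ra.index, ∑ l ∈ (rA i).index,
      (𝒮 (rb.left j) * 𝒮 (ra.left i)) *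
        ((rA i).left l * ((rB j).left m * 𝒮 ((rA i).right l * (rB j).right m))))
      = ∑ j ∈ rb.index, ∑ i ∈ ra.index, ∑ l ∈ (rA i).index, ∑ m ∈ (rB j).index,
        (𝒮 (rb.left j) * 𝒮 (ra.left i)) *
          ((rA i).left l * ((rB j).left m * 𝒮 ((rA i).right l * (rB j).right m))) := by
        refine Finset.sum_congr rfl fun j _ => ?_
        rw [Finset.sum_comm]
        exact Finset.sum_congr rfl fun i _ => Finset.sum_comm
    _ = ∑ j ∈ rb.index, ∑ i ∈ ra.index,
          (counit (R := k) (ra.right i) * counit (R := k) (rb.right j)) •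
            (𝒮 (rb.left j) * 𝒮 (ra.left i)) := by
        refine Finset.sum_congr rfl fun j _ => Finset.sum_congr rfl fun i _ => ?_
        have h := sum_mul_antipode_eq_smul (R := k) (reprMul (rA i) (rB j))
        simp only [reprMul, Bialgebra.counit_mul] at h
        rw [Finset.sum_product] at h
        calc ∑ l ∈ (rA i).index, ∑ m ∈ (rB j).index,
              (𝒮 (rb.left j) * 𝒮 (ra.left i)) *
                ((rA i).left l * ((rB j).left m * 𝒮 ((rA i).right l * (rB j).right m)))
            = (𝒮 (rb.left j) * 𝒮 (ra.left i)) *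
                ∑ l ∈ (rA i).index, ∑ m ∈ (rB j).index,
                  ((rA i).left l * (rB j).left m) * 𝒮 ((rA i).right l * (rB j).right m) := by
              rw [Finset.mul_sum]
              refine Finset.sum_congr rfl fun l _ => ?_
              rw [Finset.mul_sum]
              exact Finset.sum_congr rfl fun m _ => by simp only [mul_assoc]
          _ = (counit (R := k) (ra.right i) * counit (R := k) (rb.right j)) •
                (𝒮 (rb.left j) * 𝒮 (ra.left i)) := by
              rw [h, mul_smul_comm, mul_one]
    _ = ∑ j ∈ rb.index, counit (R := k) (rb.right j) •
          (𝒮 (rb.left j) * 𝒮 a) := by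
        refine Finset.sum_congr rfl fun j _ => ?_
        calc ∑ i ∈ ra.index,
              (counit (R := k) (ra.right i) * counit (R := k) (rb.right j)) •
                (𝒮 (rb.left j) * 𝒮 (ra.left i))
            = counit (R := k) (rb.right j) •
                (𝒮 (rb.left j) * ∑ i ∈ ra.index,
                  counit (R := k) (ra.right i) • 𝒮 (ra.left i)) := by
              rw [Finset.mul_sum, Finset.smul_sum]
              refine Finset.sum_congr rfl fun i _ => ?_
              rw [mul_comm, mul_smul, mul_smul_comm]
          _ = counit (R := k) (rb.right j) • (𝒮 (rb.left j) * 𝒮 a) := by rw [hA]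
    _ = 𝒮 b * 𝒮 a := by
        rw [show (∑ j ∈ rb.index, counit (R := k) (rb.right j) • (𝒮 (rb.left j) * 𝒮 a))
            = (∑ j ∈ rb.index, counit (R := k) (rb.right j) • 𝒮 (rb.left j)) * 𝒮 a by
          rw [Finset.sum_mul]
          exact Finset.sum_congr rfl fun j _ => (smul_mul_assoc _ _ _).symm]
        rw [hB]

end MUaux2
namespace MUaux2b
open MUaux TensorProduct LinearMap Coalgebra HopfAlgebra


local notation "𝒮" => HopfAlgebra.antipode (R := k) (A := H)

lemma E_eq_left {ι κ ι₁ ι₂ κ₁ κ₂ : Type*} (a b : H) (ra : Repr k a ι) (rb : Repr k b κ)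
    (rA : ∀ i, Repr k (ra.right i) ι₁) (rA' : ∀ i, Repr k (ra.left i) ι₂)
    (rB : ∀ j, Repr k (rb.right j) κ₁) (rB' : ∀ j, Repr k (rb.left j) κ₂) :
    (∑ j ∈ rb.index, ∑ m ∈ (rB j).index, ∑ i ∈ ra.index, ∑ l ∈ (rA i).index,
      (𝒮 (rb.left j) * 𝒮 (ra.left i)) *
        ((rA i).left l * ((rB j).left m * 𝒮 ((rA i).right l * (rB j).right m))))
      = 𝒮 (a * b) := by
  have hX : (∑ i ∈ ra.index, ∑ l ∈ (rA i).index,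
        ra.left i ⊗ₜ[k] ((rA i).left l ⊗ₜ[k] (rA i).right l))
      = ∑ i ∈ ra.index, ∑ l ∈ (rA' i).index,
        (rA' i).left l ⊗ₜ[k] ((rA' i).right l ⊗ₜ[k] ra.right i) :=
    (sum_tmul_tmul_eq ra rA' rA).symm
  have hY : (∑ j ∈ rb.index, ∑ m ∈ (rB j).index,
        rb.left j ⊗ₜ[k] ((rB j).left m ⊗ₜ[k] (rB j).right m))
      = ∑ j ∈ rb.index, ∑ m ∈ (rB' j).index,
        (rB' j).left m ⊗ₜ[k] ((rB' j).right m ⊗ₜ[k] rb.right j) :=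
    (sum_tmul_tmul_eq rb rB' rB).symm
  calc
    (∑ j ∈ rb.index, ∑ m ∈ (rB j).index, ∑ i ∈ ra.index, ∑ l ∈ (rA i).index,
      (𝒮 (rb.left j) * 𝒮 (ra.left i)) *
        ((rA i).left l * ((rB j).left m * 𝒮 ((rA i).right l * (rB j).right m))))
      = ∑ j ∈ rb.index, ∑ m ∈ (rB j).index,
          lift₃ (mulLeft k (𝒮 (rb.left j)) ∘ₗ 𝒮) LinearMap.id
            (mulLeft k ((rB j).left m) ∘ₗ 𝒮 ∘ₗ mulRight k ((rB j).right m))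
            (∑ i ∈ ra.index, ∑ l ∈ (rA i).index,
              ra.left i ⊗ₜ[k] ((rA i).left l ⊗ₜ[k] (rA i).right l)) := by
        refine Finset.sum_congr rfl fun j _ => Finset.sum_congr rfl fun m _ => ?_
        simp only [map_sum, lift₃_tmul, LinearMap.comp_apply, mulLeft_apply,
          mulRight_apply, LinearMap.id_coe, id_eq]
    _ = ∑ j ∈ rb.index, ∑ m ∈ (rB j).index, ∑ i ∈ ra.index, ∑ l ∈ (rA' i).index,
          (𝒮 (rb.left j) * 𝒮 ((rA' i).left l)) *
            ((rA' i).right l * ((rB j).left m * 𝒮 (ra.right i * (rB j).right m))) := by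
        refine Finset.sum_congr rfl fun j _ => Finset.sum_congr rfl fun m _ => ?_
        rw [hX]
        simp only [map_sum, lift₃_tmul, LinearMap.comp_apply, mulLeft_apply,
          mulRight_apply, LinearMap.id_coe, id_eq]
    _ = ∑ j ∈ rb.index, ∑ m ∈ (rB j).index, ∑ i ∈ ra.index,
          counit (R := k) (ra.left i) •
            (𝒮 (rb.left j) * ((rB j).left m * 𝒮 (ra.right i * (rB j).right m))) := by
        refine Finset.sum_congr rfl fun j _ => Finset.sum_congr rfl fun m _ =>
          Finset.sum_congr rfl fun i _ => ?_
        have h := sum_antipode_mul_eq_smul (R := k) (rA' i)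
        calc ∑ l ∈ (rA' i).index,
              (𝒮 (rb.left j) * 𝒮 ((rA' i).left l)) *
                ((rA' i).right l * ((rB j).left m * 𝒮 (ra.right i * (rB j).right m)))
            = 𝒮 (rb.left j) *
                ((∑ l ∈ (rA' i).index, 𝒮 ((rA' i).left l) * (rA' i).right l) *
                  ((rB j).left m * 𝒮 (ra.right i * (rB j).right m))) := by
              rw [Finset.sum_mul, Finset.mul_sum]
              exact Finset.sum_congr rfl fun l _ => by simp only [mul_assoc]
          _ = counit (R := k) (ra.left i) •
              (𝒮 (rb.left j) * ((rB j).left m * 𝒮 (ra.right i * (rB j).right m))) := by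
              rw [h, smul_mul_assoc, one_mul, mul_smul_comm]
    _ = ∑ j ∈ rb.index, ∑ m ∈ (rB j).index,
          𝒮 (rb.left j) * ((rB j).left m * 𝒮 (a * (rB j).right m)) := by
        refine Finset.sum_congr rfl fun j _ => Finset.sum_congr rfl fun m _ => ?_
        have := congrArg
          (mulLeft k (𝒮 (rb.left j)) ∘ₗ mulLeft k ((rB j).left m) ∘ₗ 𝒮 ∘ₗ
            mulRight k ((rB j).right m))
          (sum_counit_smul_right ra)
        simpa only [map_sum, map_smul, LinearMap.comp_apply, mulLeft_apply,
          mulRight_apply] using this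
    _ = ∑ j ∈ rb.index, ∑ m ∈ (rB' j).index,
          𝒮 ((rB' j).left m) * ((rB' j).right m * 𝒮 (a * rb.right j)) := by
        have := congrArg (lift₃ (𝒮) LinearMap.id ((𝒮) ∘ₗ mulLeft k a)) hY
        simpa only [map_sum, lift₃_tmul, LinearMap.comp_apply, mulLeft_apply,
          LinearMap.id_coe, id_eq] using this
    _ = ∑ j ∈ rb.index, counit (R := k) (rb.left j) • 𝒮 (a * rb.right j) := by
        refine Finset.sum_congr rfl fun j _ => ?_
        have h := sum_antipode_mul_eq_smul (R := k) (rB' j)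
        calc ∑ m ∈ (rB' j).index,
              𝒮 ((rB' j).left m) * ((rB' j).right m * 𝒮 (a * rb.right j))
            = (∑ m ∈ (rB' j).index, 𝒮 ((rB' j).left m) * (rB' j).right m) *
                𝒮 (a * rb.right j) := by
              rw [Finset.sum_mul]
              exact Finset.sum_congr rfl fun m _ => by simp only [mul_assoc]
          _ = counit (R := k) (rb.left j) • 𝒮 (a * rb.right j) := by
              rw [h, smul_mul_assoc, one_mul]
    _ = 𝒮 (a * b) := by
        have := congrArg ((𝒮) ∘ₗ mulLeft k a) (sum_counit_smul_right rb)
        simpa only [map_sum, map_smul, LinearMap.comp_apply, mulLeft_apply] using this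

lemma antipode_mul' (a b : H) : 𝒮 (a * b) = 𝒮 b * 𝒮 a := by
  rw [← E_eq_left a b (ℛ k a) (ℛ k b) (fun i => ℛ k _) (fun i => ℛ k _)
      (fun j => ℛ k _) (fun j => ℛ k _),
    MUaux2.E_eq_right a b (ℛ k a) (ℛ k b) (fun i => ℛ k _) (fun j => ℛ k _)]

end MUaux2b
namespace MUaux3
open MUaux MUaux2b TensorProduct LinearMap Coalgebra HopfAlgebra


local notation "𝒮" => HopfAlgebra.antipode (R := k) (A := H)

lemma sinv_one (Sinv : H →ₗ[k] H) (hS₁ : ∀ x : H, Sinv (𝒮 x) = x) :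
    Sinv 1 = 1 := by
  have h := hS₁ 1
  rwa [antipode_one'] at h

/-- `∑ x₍₂₎ * S⁻¹(x₍₁₎) = ε(x) 1` -/
lemma nu_comul_eq (Sinv : H →ₗ[k] H)
    (hS₁ : ∀ x : H, Sinv (𝒮 x) = x) (hS₂ : ∀ x : H, 𝒮 (Sinv x) = x) :
    (LinearMap.mul' k H ∘ₗ (TensorProduct.comm k H H).toLinearMap ∘ₗ
        TensorProduct.map Sinv LinearMap.id) ∘ₗ (Coalgebra.comul (R := k) (A := H))
      = Algebra.linearMap k H ∘ₗ Coalgebra.counit := by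
  refine LinearMap.ext fun x => ?_
  have hr : Coalgebra.comul (R := k) x = ∑ i ∈ (ℛ k x).index, (ℛ k x).left i ⊗ₜ[k] (ℛ k x).right i :=
    ((ℛ k x).eq).symm
  have hw : (LinearMap.mul' k H ∘ₗ (TensorProduct.comm k H H).toLinearMap ∘ₗ
        TensorProduct.map Sinv LinearMap.id) (Coalgebra.comul (R := k) x)
      = ∑ i ∈ (ℛ k x).index, (ℛ k x).right i * Sinv ((ℛ k x).left i) := by
    rw [hr]
    simp only [map_sum, LinearMap.comp_apply, TensorProduct.map_tmul, comm_tmul,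
      LinearMap.mul'_apply, LinearMap.id_coe, id_eq, LinearEquiv.coe_coe]
  have hSw : 𝒮 (∑ i ∈ (ℛ k x).index, (ℛ k x).right i * Sinv ((ℛ k x).left i))
      = algebraMap k H (Coalgebra.counit (R := k) x) := by
    rw [map_sum]
    have : ∀ i ∈ (ℛ k x).index, 𝒮 ((ℛ k x).right i * Sinv ((ℛ k x).left i))
        = (ℛ k x).left i * 𝒮 ((ℛ k x).right i) := fun i _ => by
      rw [antipode_mul', hS₂]
    rw [Finset.sum_congr rfl this, sum_mul_antipode_eq_algebraMap_counit]
  have : (∑ i ∈ (ℛ k x).index, (ℛ k x).right i * Sinv ((ℛ k x).left i))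
      = algebraMap k H (Coalgebra.counit (R := k) x) := by
    conv_lhs => rw [← hS₁ (∑ i ∈ (ℛ k x).index, (ℛ k x).right i * Sinv ((ℛ k x).left i))]
    rw [hSw, Algebra.algebraMap_eq_smul_one, map_smul, sinv_one Sinv hS₁,
      ← Algebra.algebraMap_eq_smul_one]
  simp only [LinearMap.comp_apply] at hw ⊢
  rw [hw, this]
  rfl

end MUaux3

end AuxA

section AuxB
namespace MUaux4
open MUaux MUaux2b MUaux3
open MUaux MUaux2b MUaux3 TensorProduct LinearMap Coalgebra HopfAlgebra


/-- the translation map `x ↦ Γ⁻¹(x ⊗ 1)` -/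
def tau (Γinv : H ⊗[k] B →ₗ[k] B ⊗[k] B) : H →ₗ[k] B ⊗[k] B :=
  Γinv ∘ₗ (TensorProduct.mk k H B).flip 1

@[simp] lemma tau_apply (Γinv : H ⊗[k] B →ₗ[k] B ⊗[k] B) (x : H) :
    tau k H B Γinv x = Γinv (x ⊗ₜ[k] 1) := rfl

def Fmap (Sinv : H →ₗ[k] H) (Γinv : H ⊗[k] B →ₗ[k] B ⊗[k] B) :
    H ⊗[k] B →ₗ[k] B ⊗[k] B :=
  (TensorProduct.map (LinearMap.mul' k B) LinearMap.id)
    ∘ₗ (TensorProduct.assoc k B B B).symm.toLinearMap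
    ∘ₗ (TensorProduct.map LinearMap.id (tau k H B Γinv ∘ₗ Sinv))
    ∘ₗ (TensorProduct.comm k H B).toLinearMap

lemma mul_left_tensor (y : B) (w : B ⊗[k] B) :
    (TensorProduct.map (LinearMap.mul' k B) LinearMap.id)
      ((TensorProduct.assoc k B B B).symm (y ⊗ₜ[k] w)) = (y ⊗ₜ[k] (1 : B)) * w := by
  induction w using TensorProduct.induction_on with
  | zero => simp
  | tmul p q => simp [Algebra.TensorProduct.tmul_mul_tmul]
  | add u v hu hv => simp only [tmul_add, map_add, mul_add, hu, hv]

lemma Fmap_tmul (Sinv : H →ₗ[k] H) (Γinv : H ⊗[k] B →ₗ[k] B ⊗[k] B) (x : H) (y : B) :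
    Fmap k H B Sinv Γinv (x ⊗ₜ[k] y) = (y ⊗ₜ[k] (1 : B)) * Γinv (Sinv x ⊗ₜ[k] 1) := by
  simp only [Fmap, LinearMap.comp_apply, LinearEquiv.coe_coe, comm_tmul,
    TensorProduct.map_tmul, LinearMap.id_coe, id_eq, tau_apply]
  exact mul_left_tensor k B y _

lemma gm_tmul (coact : B →ₗ[k] H ⊗[k] B) (p q : B) :
    galoisMap k H B coact (p ⊗ₜ[k] q) = coact p * ((1 : H) ⊗ₜ[k] q) := by
  simp only [galoisMap, LinearMap.comp_apply, TensorProduct.map_tmul,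
    LinearMap.id_coe, id_eq, LinearEquiv.coe_coe]
  induction coact p using TensorProduct.induction_on with
  | zero => simp
  | tmul x y => simp [Algebra.TensorProduct.tmul_mul_tmul]
  | add u v hu hv => simp only [add_tmul, map_add, add_mul, hu, hv]

lemma gm_mulLeft (coact : B →ₗ[k] H ⊗[k] B)
    (coact_mul : ∀ a b : B, coact (a * b) = coact a * coact b)
    (y : B) (w : B ⊗[k] B) :
    galoisMap k H B coact ((y ⊗ₜ[k] (1 : B)) * w)
      = coact y * galoisMap k H B coact w := by
  induction w using TensorProduct.induction_on with
  | zero => simp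
  | tmul p q =>
      rw [Algebra.TensorProduct.tmul_mul_tmul, one_mul, gm_tmul, gm_tmul, coact_mul,
        mul_assoc]
  | add u v hu hv => rw [mul_add, map_add, hu, hv, map_add, mul_add]

lemma gm_one (coact : B →ₗ[k] H ⊗[k] B) (coact_one : coact 1 = 1) (b : B) :
    galoisMap k H B coact ((1 : B) ⊗ₜ[k] b) = (1 : H) ⊗ₜ[k] b := by
  rw [gm_tmul, coact_one, one_mul]

def nu (Sinv : H →ₗ[k] H) : H ⊗[k] H →ₗ[k] H :=
  LinearMap.mul' k H ∘ₗ (TensorProduct.comm k H H).toLinearMap ∘ₗ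
    TensorProduct.map Sinv LinearMap.id

def Psi (Sinv : H →ₗ[k] H) : H ⊗[k] (H ⊗[k] B) →ₗ[k] H ⊗[k] B :=
  (TensorProduct.map (nu k H Sinv) LinearMap.id) ∘ₗ
    (TensorProduct.assoc k H H B).symm.toLinearMap

lemma Psi_tmul (Sinv : H →ₗ[k] H) (x : H) (t : H ⊗[k] B) :
    Psi k H B Sinv (x ⊗ₜ[k] t) = t * (Sinv x ⊗ₜ[k] (1 : B)) := by
  induction t using TensorProduct.induction_on with
  | zero => simp [Psi]
  | tmul h m =>
      simp [Psi, nu, Algebra.TensorProduct.tmul_mul_tmul]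
  | add u v hu hv => simp only [tmul_add, map_add, add_mul, hu, hv]

lemma gm_Fmap (coact : B →ₗ[k] H ⊗[k] B) (Sinv : H →ₗ[k] H)
    (coact_mul : ∀ a b : B, coact (a * b) = coact a * coact b)
    (Γinv : H ⊗[k] B →ₗ[k] B ⊗[k] B)
    (hΓ₂ : ∀ w : H ⊗[k] B, galoisMap k H B coact (Γinv w) = w)
    (t : H ⊗[k] B) :
    galoisMap k H B coact (Fmap k H B Sinv Γinv t)
      = Psi k H B Sinv ((TensorProduct.map LinearMap.id coact) t) := by
  induction t using TensorProduct.induction_on with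
  | zero => simp
  | tmul x y =>
      rw [Fmap_tmul, gm_mulLeft k H B coact coact_mul, hΓ₂ (Sinv x ⊗ₜ[k] 1)]
      simp only [TensorProduct.map_tmul, LinearMap.id_coe, id_eq, Psi_tmul]
  | add u v hu hv => simp only [map_add, hu, hv]

lemma algebraMap_tensor (s : k ⊗[k] B) :
    (TensorProduct.map (Algebra.linearMap k H) LinearMap.id) s
      = (1 : H) ⊗ₜ[k] (TensorProduct.lid k B s) := by
  induction s using TensorProduct.induction_on with
  | zero => simp
  | tmul c y =>
      rw [TensorProduct.map_tmul, TensorProduct.lid_tmul]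
      simp only [Algebra.linearMap_apply, LinearMap.id_coe, id_eq,
        Algebra.algebraMap_eq_smul_one]
      rw [TensorProduct.smul_tmul]
  | add u v hu hv => simp only [map_add, hu, hv, tmul_add]

/-- the key identity : `∑ b₍₂₎ (S⁻¹ b₍₁₎)⁽¹⁾ ⊗ (S⁻¹ b₍₁₎)⁽²⁾ = 1 ⊗ b`. -/
lemma key (coact : B →ₗ[k] H ⊗[k] B) (Sinv : H →ₗ[k] H)
    (hS₁ : ∀ x : H, Sinv (HopfAlgebra.antipode (R := k) x) = x)
    (hS₂ : ∀ x : H, HopfAlgebra.antipode (R := k) (Sinv x) = x)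
    (coact_one : coact 1 = 1)
    (coact_mul : ∀ a b : B, coact (a * b) = coact a * coact b)
    (coact_coassoc : ∀ a : B,
      (TensorProduct.map Coalgebra.comul LinearMap.id) (coact a)
        = (TensorProduct.assoc k H H B).symm ((TensorProduct.map LinearMap.id coact) (coact a)))
    (coact_counit : ∀ a : B,
      (TensorProduct.lid k B)
        ((TensorProduct.map (Coalgebra.counit (R := k)) LinearMap.id) (coact a)) = a)
    (Γinv : H ⊗[k] B →ₗ[k] B ⊗[k] B)
    (hΓ₁ : ∀ z : B ⊗[k] B, Γinv (galoisMap k H B coact z) = z)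
    (hΓ₂ : ∀ w : H ⊗[k] B, galoisMap k H B coact (Γinv w) = w)
    (b : B) :
    Fmap k H B Sinv Γinv (coact b) = (1 : B) ⊗ₜ[k] b := by
  have h2 : (TensorProduct.map LinearMap.id coact) (coact b)
      = (TensorProduct.assoc k H H B)
          ((TensorProduct.map Coalgebra.comul LinearMap.id) (coact b)) := by
    rw [coact_coassoc b, LinearEquiv.apply_symm_apply]
  have h1 : galoisMap k H B coact (Fmap k H B Sinv Γinv (coact b))
      = (1 : H) ⊗ₜ[k] b := by
    rw [gm_Fmap k H B coact Sinv coact_mul Γinv hΓ₂, h2]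
    have h3 : ∀ s : (H ⊗[k] H) ⊗[k] B,
        Psi k H B Sinv ((TensorProduct.assoc k H H B) s)
          = (TensorProduct.map (nu k H Sinv) LinearMap.id) s := by
      intro s
      simp only [Psi, LinearMap.comp_apply, LinearEquiv.coe_coe,
        LinearEquiv.symm_apply_apply]
    rw [h3]
    have h4 : (TensorProduct.map (nu k H Sinv) LinearMap.id)
        ((TensorProduct.map Coalgebra.comul LinearMap.id) (coact b))
        = (TensorProduct.map (Algebra.linearMap k H) LinearMap.id)
            ((TensorProduct.map (Coalgebra.counit (R := k)) LinearMap.id) (coact b)) := by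
      have e1 : (TensorProduct.map (nu k H Sinv) (LinearMap.id (M := B))).comp
            (TensorProduct.map Coalgebra.comul LinearMap.id)
          = (TensorProduct.map (Algebra.linearMap k H) LinearMap.id).comp
            (TensorProduct.map (Coalgebra.counit (R := k)) LinearMap.id) := by
        rw [← TensorProduct.map_comp, ← TensorProduct.map_comp]
        congr 1
        exact nu_comul_eq Sinv hS₁ hS₂
      rw [← LinearMap.comp_apply, e1, LinearMap.comp_apply]
    rw [h4, algebraMap_tensor, coact_counit b]
  calc Fmap k H B Sinv Γinv (coact b)
      = Γinv (galoisMap k H B coact (Fmap k H B Sinv Γinv (coact b))) := (hΓ₁ _).symm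
    _ = Γinv (galoisMap k H B coact ((1 : B) ⊗ₜ[k] b)) := by
        rw [h1, gm_one k H B coact coact_one]
    _ = (1 : B) ⊗ₜ[k] b := hΓ₁ _


end MUaux4
end AuxB

section Final

lemma sandwich_tmul (p q c : B) :
    sandwich k B ((p ⊗ₜ[k] q) ⊗ₜ[k] c) = p * (c * q) := by
  simp [sandwich]

lemma sand_mulLeft (y c : B) (w : B ⊗[k] B) :
    sandwich k B (((y ⊗ₜ[k] (1 : B)) * w) ⊗ₜ[k] c)
      = y * sandwich k B (w ⊗ₜ[k] c) := by
  induction w using TensorProduct.induction_on with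
  | zero => simp
  | tmul p q =>
      rw [Algebra.TensorProduct.tmul_mul_tmul, one_mul, sandwich_tmul, sandwich_tmul,
        mul_assoc]
  | add u v hu hv =>
      rw [mul_add, add_tmul, map_add, hu, hv, add_tmul, map_add, mul_add]

lemma actT_muAct (Γinv : H ⊗[k] B →ₗ[k] B ⊗[k] B) (h : H) (c : B) :
    actT k H B (muAct k H B Γinv) (h ⊗ₜ[k] c)
      = sandwich k B (Γinv (h ⊗ₜ[k] 1) ⊗ₜ[k] c) := by
  simp [actT, muAct]

end Final


/-- Let `B` be an `H`-Galois extension of `k` (with `H` having an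
invertible antipode) equipped with the Miyashita–Ulbrich action `▷`.  Then `B` with
its comodule structure and the action `▷` satisfies braided commutativity:
`a b = b₍₂₎ (S⁻¹(b₍₁₎) ▷ a)` for all `a, b ∈ B`. -/
theorem miyashitaUlbrich_braided_commutative
    (coact : B →ₗ[k] H ⊗[k] B)
    (Sinv : H →ₗ[k] H)
    (hS₁ : ∀ x : H, Sinv (HopfAlgebra.antipode (R := k) x) = x)
    (hS₂ : ∀ x : H, HopfAlgebra.antipode (R := k) (Sinv x) = x)
    (coact_one : coact 1 = 1)
    (coact_mul : ∀ a b : B, coact (a * b) = coact a * coact b)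
    (coact_coassoc : ∀ a : B,
      (TensorProduct.map Coalgebra.comul LinearMap.id) (coact a)
        = (TensorProduct.assoc k H H B).symm ((TensorProduct.map LinearMap.id coact) (coact a)))
    (coact_counit : ∀ a : B,
      (TensorProduct.lid k B)
        ((TensorProduct.map (Coalgebra.counit (R := k)) LinearMap.id) (coact a)) = a)
    (hcoinv : ∀ b : B, coact b = (1 : H) ⊗ₜ[k] b → ∃ c : k, b = c • (1 : B))
    (Γinv : H ⊗[k] B →ₗ[k] B ⊗[k] B)
    (hΓ₁ : ∀ z : B ⊗[k] B, Γinv (galoisMap k H B coact z) = z)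
    (hΓ₂ : ∀ w : H ⊗[k] B, galoisMap k H B coact (Γinv w) = w) :
    ∀ a b : B, a * b = braid k H B (muAct k H B Γinv) Sinv coact (a ⊗ₜ[k] b) := by
  intro a b
  have hbr : ∀ t : H ⊗[k] B,
      LinearMap.mul' k B ((TensorProduct.comm k B B)
        ((TensorProduct.map (actT k H B (muAct k H B Γinv)) LinearMap.id)
          ((TensorProduct.map (TensorProduct.map Sinv LinearMap.id) LinearMap.id)
            ((TensorProduct.map (TensorProduct.comm k B H).toLinearMap LinearMap.id)
              ((TensorProduct.assoc k B H B).symm (a ⊗ₜ[k] t))))))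
      = sandwich k B ((MUaux4.Fmap k H B Sinv Γinv t) ⊗ₜ[k] a) := by
    intro t
    induction t using TensorProduct.induction_on with
    | zero => simp
    | tmul x y =>
        rw [MUaux4.Fmap_tmul]
        simp only [assoc_symm_tmul, TensorProduct.map_tmul, LinearEquiv.coe_coe,
          comm_tmul, LinearMap.id_coe, id_eq, LinearMap.mul'_apply]
        rw [actT_muAct, sand_mulLeft]
    | add u v hu hv =>
        simp only [tmul_add, map_add, add_tmul, hu, hv]
  calc a * b
      = sandwich k B (((1 : B) ⊗ₜ[k] b) ⊗ₜ[k] a) := by rw [sandwich_tmul, one_mul]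
    _ = sandwich k B ((MUaux4.Fmap k H B Sinv Γinv (coact b)) ⊗ₜ[k] a) := by
        rw [MUaux4.key k H B coact Sinv hS₁ hS₂ coact_one coact_mul coact_coassoc
          coact_counit Γinv hΓ₁ hΓ₂ b]
    _ = braid k H B (muAct k H B Γinv) Sinv coact (a ⊗ₜ[k] b) := by
        rw [← hbr (coact b)]
        simp only [braid, LinearMap.comp_apply, LinearEquiv.coe_coe,
          TensorProduct.map_tmul, LinearMap.id_coe, id_eq]
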